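/- Let γ : X → H be strongly p-integrable, i.e., measurable with ∫_X ‖γ(x)‖^p dμ(x) < ∞, where 1 ≤ p < ∞. Then A_γ : H → L^p(X,μ), v ↦ ⟨v, γ(·)⟩, is a compact operator. -/

import Mathlib

open MeasureTheory Filter
open scoped InnerProductSpace ENNReal Topology

section aux

variable {X : Type*} [MeasurableSpace X] {μ : Measure X} {H : Type*} [NormedAddCommGroup H]
  [InnerProductSpace ℂ H] {p : ℝ≥0∞} [Fact (1 ≤ p)]

/-- The underlying linear map `v ↦ (x ↦ ⟪f x, v⟫)` into `Lp`. -/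
noncomputable def evalLM (f : X → H) (hf : MemLp f p μ) : H →ₗ[ℂ] Lp ℂ p μ where
  toFun v := (hf.inner_const v).toLp _
  map_add' v w := by
    rw [← MemLp.toLp_add]
    exact MemLp.toLp_congr _ _ (Eventually.of_forall fun x => inner_add_right _ _ _)
  map_smul' c v := by
    rw [RingHom.id_apply]
    calc (hf.inner_const (c • v)).toLp _
        = ((hf.inner_const v).const_smul c).toLp (c • fun a => ⟪f a, v⟫_ℂ) :=
          MemLp.toLp_congr _ _ (Eventually.of_forall fun x => inner_smul_right _ _ _)
      _ = c • (hf.inner_const v).toLp _ := MemLp.toLp_const_smul c _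

theorem evalLM_bound (f : X → H) (hf : MemLp f p μ) (v : H) :
    ‖evalLM f hf v‖ ≤ (eLpNorm f p μ).toReal * ‖v‖ := by
  have h2 : eLpNorm (fun x => ⟪f x, v⟫_ℂ) p μ ≤ (‖v‖₊ : ℝ≥0∞) * eLpNorm f p μ := by
    have h1 : eLpNorm (fun x => ⟪f x, v⟫_ℂ) p μ ≤ eLpNorm ((‖v‖ : ℝ) • f) p μ := by
      refine eLpNorm_mono fun x => ?_
      rw [Pi.smul_apply, norm_smul, norm_norm]
      exact (norm_inner_le_norm _ _).trans (le_of_eq (mul_comm _ _))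
    rw [eLpNorm_const_smul, enorm_norm] at h1
    exact h1
  calc ‖evalLM f hf v‖ = (eLpNorm (fun x => ⟪f x, v⟫_ℂ) p μ).toReal := by
        simp only [evalLM, LinearMap.coe_mk, AddHom.coe_mk]
        exact Lp.norm_toLp _ _
    _ ≤ ((‖v‖₊ : ℝ≥0∞) * eLpNorm f p μ).toReal :=
        ENNReal.toReal_mono (ENNReal.mul_ne_top ENNReal.coe_ne_top hf.2.ne) h2
    _ = (eLpNorm f p μ).toReal * ‖v‖ := by
        rw [ENNReal.toReal_mul, ENNReal.coe_toReal, coe_nnnorm, mul_comm]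

/-- The continuous linear map `v ↦ (x ↦ ⟪f x, v⟫)` into `Lp`. -/
noncomputable def evalOp (f : X → H) (hf : MemLp f p μ) : H →L[ℂ] Lp ℂ p μ :=
  LinearMap.mkContinuous (evalLM f hf) (eLpNorm f p μ).toReal (evalLM_bound f hf)

theorem evalOp_apply (f : X → H) (hf : MemLp f p μ) (v : H) :
    evalOp f hf v = (hf.inner_const v).toLp _ := rfl

theorem evalOp_norm_le (f : X → H) (hf : MemLp f p μ) :
    ‖evalOp f hf‖ ≤ (eLpNorm f p μ).toReal :=
  LinearMap.mkContinuous_norm_le _ ENNReal.toReal_nonneg _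

/-- A continuous linear map whose range lies in a finite-dimensional submodule is compact. -/
theorem isCompactOperator_of_mem_fd {E F : Type*} [NormedAddCommGroup E] [NormedSpace ℂ E]
    [NormedAddCommGroup F] [NormedSpace ℂ F] (f : E →L[ℂ] F) (M : Submodule ℂ F)
    [FiniteDimensional ℂ M] (h : ∀ x, f x ∈ M) : IsCompactOperator f := by
  let g : E →L[ℂ] M := f.codRestrict M h
  have hb : Bornology.IsBounded (g '' Metric.ball 0 1) :=
    g.lipschitz.isBounded_image Metric.isBounded_ball
  have hc : IsCompact (closure (g '' Metric.ball 0 1)) := hb.isCompact_closure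
  refine ⟨M.subtypeL '' closure (g '' Metric.ball 0 1), hc.image M.subtypeL.continuous,
    Filter.mem_of_superset (Metric.ball_mem_nhds 0 one_pos) fun x hx => ?_⟩
  exact ⟨g x, subset_closure ⟨x, hx, rfl⟩, rfl⟩

/-- The evaluation operator of a simple function is compact. -/
theorem evalOp_simpleFunc_isCompact [CompleteSpace H] (s : SimpleFunc X H)
    (hs : MemLp (⇑s) p μ) : IsCompactOperator (evalOp (⇑s) hs) := by
  set W : Submodule ℂ H := Submodule.span ℂ (s.range : Set H) with hWdef
  have hW : FiniteDimensional ℂ W := FiniteDimensional.span_of_finite ℂ s.range.finite_toSet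
  set M : Submodule ℂ (Lp ℂ p μ) :=
    W.map ((evalOp (⇑s) hs) : H →ₗ[ℂ] Lp ℂ p μ) with hMdef
  have hM : FiniteDimensional ℂ M := Module.Finite.map W _
  refine isCompactOperator_of_mem_fd _ M fun v => ?_
  have hmem : ∀ x, s x ∈ W :=
    fun x => Submodule.subset_span (by simpa using s.mem_range_self x)
  refine Submodule.mem_map.2 ⟨(W.orthogonalProjectionOnto v : H), SetLike.coe_mem _, ?_⟩
  show evalOp (⇑s) hs ((W.orthogonalProjectionOnto v : H)) = evalOp (⇑s) hs v
  rw [evalOp_apply, evalOp_apply]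
  refine MemLp.toLp_congr _ _ (Eventually.of_forall fun x => ?_)
  have h0 : v - (W.orthogonalProjectionOnto v : H) ∈ Wᗮ :=
    Submodule.sub_starProjection_mem_orthogonal (K := W) v
  have h1 : ⟪s x, v - (W.orthogonalProjectionOnto v : H)⟫_ℂ = 0 :=
    (Submodule.mem_orthogonal W _).1 h0 (s x) (hmem x)
  rw [inner_sub_right, sub_eq_zero] at h1
  exact h1.symm

end aux

/-- if `γ : X → H` is strongly `p`-integrable (`1 ≤ p < ∞`), i.e.
(strongly a.e.) measurable with `∫ ‖γ x‖^p dμ < ∞` — in Mathlib: `MemLp γ p μ` —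
then the operator `A_γ : H → L^p(X,μ)`, `v ↦ ⟨v, γ(·)⟩ = ⟪γ ·, v⟫_ℂ`, is compact. -/
theorem eval_operator_compact_of_stronglyIntegrable {X : Type*} [MeasurableSpace X]
    (μ : Measure X) [SigmaFinite μ] {H : Type*} [NormedAddCommGroup H]
    [InnerProductSpace ℂ H] [CompleteSpace H] [TopologicalSpace.SeparableSpace H]
    (γ : X → H) (p : ℝ≥0∞) [Fact (1 ≤ p)] (hp' : p ≠ ∞)
    (hγ : MemLp γ p μ) :
    ∃ T : H →L[ℂ] Lp ℂ p μ,
      (∀ v : H, (T v : X → ℂ) =ᵐ[μ] fun x => ⟪γ x, v⟫_ℂ) ∧ IsCompactOperator T := by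
  refine ⟨evalOp γ hγ, fun v => MemLp.coeFn_toLp (hγ.inner_const v), ?_⟩
  have hex : ∀ n : ℕ, ∃ s : SimpleFunc X H,
      eLpNorm (γ - ⇑s) p μ < ENNReal.ofReal (1 / (n + 1)) ∧ MemLp (⇑s) p μ :=
    fun n => hγ.exists_simpleFunc_eLpNorm_sub_lt hp'
      (ENNReal.ofReal_pos.2 (by positivity)).ne'
  choose s hs hsm using hex
  have key : ∀ n : ℕ, ‖evalOp (⇑(s n)) (hsm n) - evalOp γ hγ‖ ≤ 1 / (n + 1) := by
    intro n
    have heq : evalOp (⇑(s n)) (hsm n) - evalOp γ hγ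
        = evalOp (⇑(s n) - γ) ((hsm n).sub hγ) := by
      refine ContinuousLinearMap.ext fun v => ?_
      rw [ContinuousLinearMap.sub_apply, evalOp_apply, evalOp_apply, evalOp_apply,
        ← MemLp.toLp_sub]
      exact MemLp.toLp_congr _ _
        (Eventually.of_forall fun x => (inner_sub_left _ _ _).symm)
    rw [heq]
    refine (evalOp_norm_le _ _).trans ?_
    refine ENNReal.toReal_le_of_le_ofReal (by positivity) ?_
    have : eLpNorm (⇑(s n) - γ) p μ = eLpNorm (γ - ⇑(s n)) p μ := by
      rw [← eLpNorm_neg, neg_sub]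
    rw [this]
    exact (hs n).le
  have hT : Tendsto (fun n => evalOp (⇑(s n)) (hsm n)) atTop (𝓝 (evalOp γ hγ)) := by
    rw [tendsto_iff_norm_sub_tendsto_zero]
    exact squeeze_zero (fun n => norm_nonneg _) key
      tendsto_one_div_add_atTop_nhds_zero_nat
  exact isCompactOperator_of_tendsto hT
    (Eventually.of_forall fun n => evalOp_simpleFunc_isCompact (s n) (hsm n))
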